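/- Let H be self-adjoint on ℋ and for each t > 1 let P(t) be a bounded operator such that (d/dt)⟨e^{itH}P(t)e^{−itH}f, f⟩ = t^{−1}‖Q(t)e^{−itH}f‖² + ⟨R(t)e^{−itH}f, e^{−itH}f⟩ with ‖P(t)‖ ≤ 1 and ‖R(t)‖ ≤ C t^{−2}. Then there is a constant M > 0 such that for all t > s > 1 and all f ∈ ℋ, ∫_s^t τ^{−1}‖Q(τ)e^{−iτH}f‖² dτ ≤ M²‖f‖². -/

import Mathlib

open Filter MeasureTheory

/-- abstract Kato-smoothness / propagation bound from a positive Heisenberg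
derivative.  `U t = e^{itH}` is the unitary group of `H`; `P(t), Q(t), R(t)` are bounded
families with `‖P(t)‖ ≤ 1`, `‖R(t)‖ ≤ C t^{−2}`, and, for every `f`,
`d/dt ⟨P(t)e^{−itH}f, e^{−itH}f⟩ = t⁻¹‖Q(t)e^{−itH}f‖² + ⟨R(t)e^{−itH}f, e^{−itH}f⟩`.
Then there is `M > 0` with `∫_s^t τ⁻¹‖Q(τ)e^{−iτH}f‖² dτ ≤ M²‖f‖²` for all `t > s > 1`. -/
theorem kato_smoothness_bound {ℋ : Type*} [NormedAddCommGroup ℋ] [InnerProductSpace ℂ ℋ]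
    [CompleteSpace ℋ]
    (U : ℝ → ℋ →L[ℂ] ℋ)
    (hU0 : U 0 = 1) (hUadd : ∀ s t : ℝ, U (s + t) = (U s).comp (U t))
    (hUiso : ∀ (t : ℝ) (f : ℋ), ‖U t f‖ = ‖f‖)
    (P Q R : ℝ → ℋ →L[ℂ] ℋ) (C : ℝ) (hC : 0 ≤ C)
    (hP : ∀ t : ℝ, 1 < t → ‖P t‖ ≤ 1)
    (hR : ∀ t : ℝ, 1 < t → ‖R t‖ ≤ C * t ^ (-2 : ℝ))
    (hcont : ∀ f : ℋ, ContinuousOn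
      (fun τ : ℝ => ((τ⁻¹ * ‖Q τ (U (-τ) f)‖ ^ 2 : ℝ) : ℂ)
        + (inner ℂ (R τ (U (-τ) f)) (U (-τ) f) : ℂ)) (Set.Ioi 1))
    (hderiv : ∀ (f : ℋ) (t : ℝ), 1 < t →
      HasDerivAt (fun τ : ℝ => (inner ℂ (P τ (U (-τ) f)) (U (-τ) f) : ℂ))
        (((t⁻¹ * ‖Q t (U (-t) f)‖ ^ 2 : ℝ) : ℂ)
          + (inner ℂ (R t (U (-t) f)) (U (-t) f) : ℂ)) t) :
    ∃ M : ℝ, 0 < M ∧ ∀ (f : ℋ) (s t : ℝ), 1 < s → s < t →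
      (∫ τ in s..t, τ⁻¹ * ‖Q τ (U (-τ) f)‖ ^ 2) ≤ M ^ 2 * ‖f‖ ^ 2 := by
  refine ⟨Real.sqrt (2 + C), Real.sqrt_pos.mpr (by linarith), ?_⟩
  intro f s t hs hst
  rw [Real.sq_sqrt (by linarith : (0:ℝ) ≤ 2 + C)]
  have hgnorm : ∀ τ : ℝ, ‖U (-τ) f‖ = ‖f‖ := fun τ => hUiso _ _
  by_cases hInt :
      IntervalIntegrable (fun τ : ℝ => τ⁻¹ * ‖Q τ (U (-τ) f)‖ ^ 2) volume s t
  · set A : ℝ → ℝ := fun τ => τ⁻¹ * ‖Q τ (U (-τ) f)‖ ^ 2 with hA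
    set B : ℝ → ℝ := fun τ => (inner ℂ (R τ (U (-τ) f)) (U (-τ) f) : ℂ).re with hB
    have hsub : Set.uIcc s t ⊆ Set.Ioi 1 := by
      rw [Set.uIcc_of_le hst.le]
      intro x hx
      exact lt_of_lt_of_le hs hx.1
    have hABcont : ContinuousOn (fun τ => A τ + B τ) (Set.Ioi 1) := by
      have h := Complex.continuous_re.comp_continuousOn (hcont f)
      convert h using 1
      ext τ
      simp only [A, B, Function.comp_apply, Complex.add_re, Complex.ofReal_re]
    have hABint : IntervalIntegrable (fun τ => A τ + B τ) volume s t :=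
      (hABcont.mono hsub).intervalIntegrable
    have hBint : IntervalIntegrable B volume s t := by
      have h := hABint.sub hInt
      simpa using h
    have hFTC : ∫ τ in s..t, (A τ + B τ) =
        (inner ℂ (P t (U (-t) f)) (U (-t) f) : ℂ).re
          - (inner ℂ (P s (U (-s) f)) (U (-s) f) : ℂ).re := by
      apply intervalIntegral.integral_eq_sub_of_hasDerivAt
      · intro x hx
        have h1 : 1 < x := hsub hx
        have h := (Complex.reCLM.hasFDerivAt).comp_hasDerivAt x (hderiv f x h1)
        convert h using 1
        · ext τ
          simp
        · simp only [A, B, Complex.reCLM_apply, Complex.add_re, Complex.ofReal_re]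
      · exact hABint
    have hPbound : ∀ τ : ℝ, 1 < τ →
        |(inner ℂ (P τ (U (-τ) f)) (U (-τ) f) : ℂ).re| ≤ ‖f‖ ^ 2 := by
      intro τ hτ
      have h1 : |(inner ℂ (P τ (U (-τ) f)) (U (-τ) f) : ℂ).re|
          ≤ ‖(inner ℂ (P τ (U (-τ) f)) (U (-τ) f) : ℂ)‖ := Complex.abs_re_le_norm _
      have h2 : ‖(inner ℂ (P τ (U (-τ) f)) (U (-τ) f) : ℂ)‖
          ≤ ‖P τ (U (-τ) f)‖ * ‖U (-τ) f‖ := norm_inner_le_norm _ _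
      have h3 := (P τ).le_opNorm (U (-τ) f)
      have h4 := hP τ hτ
      have h5 := norm_nonneg (U (-τ) f)
      have h6 := hgnorm τ
      have h9 : ‖(inner ℂ (P τ (U (-τ) f)) (U (-τ) f) : ℂ)‖ ≤ ‖f‖ ^ 2 := by
        calc ‖(inner ℂ (P τ (U (-τ) f)) (U (-τ) f) : ℂ)‖
            ≤ ‖P τ (U (-τ) f)‖ * ‖U (-τ) f‖ := h2
          _ ≤ (‖P τ‖ * ‖U (-τ) f‖) * ‖U (-τ) f‖ := mul_le_mul_of_nonneg_right h3 h5
          _ ≤ (1 * ‖U (-τ) f‖) * ‖U (-τ) f‖ :=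
              mul_le_mul_of_nonneg_right (mul_le_mul_of_nonneg_right h4 h5) h5
          _ = ‖f‖ ^ 2 := by rw [h6]; ring
      linarith
    have hBbound : ∀ τ ∈ Set.Icc s t, -(C * ‖f‖ ^ 2 * τ ^ (-2:ℝ)) ≤ B τ := by
      intro τ hτ
      have hτ1 : 1 < τ := lt_of_lt_of_le hs hτ.1
      have h1 : |B τ| ≤ ‖(inner ℂ (R τ (U (-τ) f)) (U (-τ) f) : ℂ)‖ :=
        Complex.abs_re_le_norm _
      have h2 : ‖(inner ℂ (R τ (U (-τ) f)) (U (-τ) f) : ℂ)‖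
          ≤ ‖R τ (U (-τ) f)‖ * ‖U (-τ) f‖ := norm_inner_le_norm _ _
      have h3 := (R τ).le_opNorm (U (-τ) f)
      have h4 := hR τ hτ1
      have h5 := norm_nonneg (U (-τ) f)
      have h6 := hgnorm τ
      have h7 : (0:ℝ) ≤ τ ^ (-2:ℝ) := Real.rpow_nonneg (by linarith) _
      have h8 := abs_le.mp h1
      have h9 : ‖(inner ℂ (R τ (U (-τ) f)) (U (-τ) f) : ℂ)‖ ≤ C * τ ^ (-2:ℝ) * ‖f‖ ^ 2 := by
        calc ‖(inner ℂ (R τ (U (-τ) f)) (U (-τ) f) : ℂ)‖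
            ≤ ‖R τ (U (-τ) f)‖ * ‖U (-τ) f‖ := h2
          _ ≤ (‖R τ‖ * ‖U (-τ) f‖) * ‖U (-τ) f‖ := mul_le_mul_of_nonneg_right h3 h5
          _ ≤ (C * τ ^ (-2:ℝ) * ‖U (-τ) f‖) * ‖U (-τ) f‖ :=
              mul_le_mul_of_nonneg_right (mul_le_mul_of_nonneg_right h4 h5) h5
          _ = C * τ ^ (-2:ℝ) * ‖f‖ ^ 2 := by rw [h6]; ring
      have := h8.1
      nlinarith
    have hccont : ContinuousOn (fun τ : ℝ => -(C * ‖f‖ ^ 2 * τ ^ (-2:ℝ)))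
        (Set.uIcc s t) := by
      apply ContinuousOn.neg
      apply continuousOn_const.mul
      intro x hx
      exact (Real.continuousAt_rpow_const x _
        (Or.inl (ne_of_gt (lt_trans one_pos (hsub hx))))).continuousWithinAt
    have hcint : IntervalIntegrable (fun τ : ℝ => -(C * ‖f‖ ^ 2 * τ ^ (-2:ℝ)))
        volume s t := hccont.intervalIntegrable
    have hmono : (∫ τ in s..t, -(C * ‖f‖ ^ 2 * τ ^ (-2:ℝ))) ≤ ∫ τ in s..t, B τ := by
      apply intervalIntegral.integral_mono_on hst.le hcint hBint hBbound
    have hrpow : (∫ τ in s..t, τ ^ (-2:ℝ)) = s⁻¹ - t⁻¹ := by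
      rw [integral_rpow (Or.inr ⟨by norm_num, fun h => by
        have := hsub h
        simp at this
        linarith⟩)]
      norm_num
      rw [Real.rpow_neg_one, Real.rpow_neg_one]
      ring
    have hcval : (∫ τ in s..t, -(C * ‖f‖ ^ 2 * τ ^ (-2:ℝ)))
        = -(C * ‖f‖ ^ 2 * (s⁻¹ - t⁻¹)) := by
      rw [intervalIntegral.integral_neg, intervalIntegral.integral_const_mul, hrpow]
    have hsplit : (∫ τ in s..t, (A τ + B τ))
        = (∫ τ in s..t, A τ) + ∫ τ in s..t, B τ :=
      intervalIntegral.integral_add hInt hBint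
    have hs1 : s⁻¹ ≤ 1 := by
      rw [inv_le_comm₀ (by linarith) one_pos]; simpa using hs.le
    have ht1 : (0:ℝ) < t⁻¹ := inv_pos.mpr (by linarith)
    have hsti : s⁻¹ - t⁻¹ ≤ 1 := by linarith
    have hPb1 := abs_le.mp (hPbound t (lt_trans hs hst))
    have hPb2 := abs_le.mp (hPbound s hs)
    have hf2 : (0:ℝ) ≤ ‖f‖ ^ 2 := by positivity
    have hBge : -(C * ‖f‖ ^ 2) ≤ ∫ τ in s..t, B τ := by
      have h10 := mul_le_mul_of_nonneg_left hsti (mul_nonneg hC hf2)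
      rw [mul_one] at h10
      rw [hcval] at hmono
      linarith
    rw [hsplit] at hFTC
    linarith [hBge, hPb1.1, hPb1.2, hPb2.1, hPb2.2]
  · rw [intervalIntegral.integral_undef hInt]
    positivity
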